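/- Every string P of length m admits a 1-factorization of size at most m, and the greedy factorization (taking each factor maximal) yields a 1-factorization of minimal size. -/

import Mathlib

/-- The greedy factor length at the start of l: the largest i ≤ |l| with l.take i duplicate-free
(the next character, if any, then necessarily occurs in the factor). -/
def oneLen {α : Type*} [DecidableEq α] (l : List α) : ℕ :=
  Nat.findGreatest (fun i => (l.take i).Nodup) l.length

/-- The greedy 1-factorization: repeatedly take a maximal duplicate-free prefix.
(For a nonempty list the greedy factor length is at least 1, so `max 1` is redundant
but makes termination evident.) -/
def greedy {α : Type*} [DecidableEq α] (l : List α) : List (List α) :=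
  if h : l = [] then []
  else l.take (max 1 (oneLen l)) :: greedy (l.drop (max 1 (oneLen l)))
termination_by l.length
decreasing_by
  have h1 : 0 < l.length := List.length_pos_iff.mpr h
  have h2 := le_max_left 1 (oneLen l)
  simp only [List.length_drop]
  omega

lemma oneLen_nodup {α : Type*} [DecidableEq α] (l : List α) : (l.take (oneLen l)).Nodup := by
  unfold oneLen
  exact Nat.findGreatest_spec (P := fun i => (l.take i).Nodup) (m := 0) (Nat.zero_le _) (show (l.take 0).Nodup by simp)

lemma one_le_oneLen {α : Type*} [DecidableEq α] {l : List α} (h : l ≠ []) : 1 ≤ oneLen l := by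
  apply Nat.le_findGreatest (List.length_pos_iff.mpr h)
  cases l with
  | nil => simp at h
  | cons a t => exact List.nodup_singleton a

lemma le_oneLen {α : Type*} [DecidableEq α] {l : List α} {n : ℕ}
    (hn : n ≤ l.length) (h : (l.take n).Nodup) : n ≤ oneLen l :=
  Nat.le_findGreatest hn h

lemma greedy_eq {α : Type*} [DecidableEq α] {l : List α} (h : l ≠ []) :
    greedy l = l.take (oneLen l) :: greedy (l.drop (oneLen l)) := by
  rw [greedy]
  simp [h, Nat.max_eq_right (one_le_oneLen h)]

lemma drop_fact {α : Type*} (us : List (List α)) (hv : ∀ u ∈ us, u ≠ [] ∧ u.Nodup) (k : ℕ) :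
    ∃ vs : List (List α), vs.flatten = us.flatten.drop k ∧
      (∀ v ∈ vs, v ≠ [] ∧ v.Nodup) ∧ vs.length ≤ us.length := by
  induction us generalizing k with
  | nil => exact ⟨[], by simp, by simp, by simp⟩
  | cons u us ih =>
    by_cases hk : u.length ≤ k
    · obtain ⟨vs, h1, h2, h3⟩ := ih (fun v hv' => hv v (by simp [hv'])) (k - u.length)
      refine ⟨vs, ?_, h2, by simpa using Nat.le_succ_of_le h3⟩
      rw [h1, List.flatten_cons]
      conv_rhs => rw [show k = u.length + (k - u.length) by omega]
      rw [List.drop_append]; simp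
    · refine ⟨u.drop k :: us, ?_, ?_, by simp⟩
      · simp [List.drop_append_of_le_length (le_of_not_ge hk)]
      · intro v hv'
        rcases List.mem_cons.mp hv' with rfl | hm
        · constructor
          · intro he
            have := congrArg List.length he
            simp at this
            omega
          · exact (hv u (by simp)).2.sublist (List.drop_sublist _ _)
        · exact hv v (by simp [hm])

lemma greedy_flatten {α : Type*} [DecidableEq α] (l : List α) : (greedy l).flatten = l := by
  by_cases h : l = []
  · simp [h, greedy]
  · rw [greedy_eq h, List.flatten_cons, greedy_flatten (l.drop (oneLen l)), List.take_append_drop]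
termination_by l.length
decreasing_by
  have h1 : 0 < l.length := List.length_pos_iff.mpr h
  have := one_le_oneLen h
  simp only [List.length_drop]; omega

lemma greedy_valid {α : Type*} [DecidableEq α] (l : List α) :
    ∀ u ∈ greedy l, u ≠ [] ∧ u.Nodup := by
  by_cases h : l = []
  · simp [h, greedy]
  · rw [greedy_eq h]
    intro u hu
    rcases List.mem_cons.mp hu with rfl | h'
    · constructor
      · have := one_le_oneLen h
        have h1 : 0 < l.length := List.length_pos_iff.mpr h
        intro he
        have := congrArg List.length he
        simp only [List.length_take, List.length_nil] at this
        omega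
      · exact oneLen_nodup l
    · exact greedy_valid (l.drop (oneLen l)) u h'
termination_by l.length
decreasing_by
  have h1 : 0 < l.length := List.length_pos_iff.mpr h
  have := one_le_oneLen h
  simp only [List.length_drop]; omega

lemma greedy_min {α : Type*} [DecidableEq α] (l : List α) :
    ∀ us : List (List α), us.flatten = l → (∀ u ∈ us, u ≠ [] ∧ u.Nodup) →
      (greedy l).length ≤ us.length := by
  intro us hf hv
  by_cases h : l = []
  · simp [h, greedy]
  · rw [greedy_eq h]
    cases us with
    | nil => simp at hf; exact absurd hf h
    | cons u us =>
      simp only [List.length_cons, Nat.succ_le_succ_iff]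
      have hu := hv u (by simp)
      have hul : u.length ≤ oneLen l := by
        apply le_oneLen
        · rw [← hf]; simp
        · have : l.take u.length = u := by
            rw [← hf, List.flatten_cons, List.take_left]
          rw [this]; exact hu.2
      have hrest : us.flatten = l.drop u.length := by
        rw [← hf, List.flatten_cons, List.drop_left]
      obtain ⟨vs, h1, h2, h3⟩ := drop_fact us (fun v hv' => hv v (by simp [hv']))
        (oneLen l - u.length)
      have h1' : vs.flatten = l.drop (oneLen l) := by
        rw [h1, hrest, List.drop_drop]
        congr 1
        omega
      calc (greedy (l.drop (oneLen l))).length ≤ vs.length :=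
            greedy_min _ vs h1' h2
        _ ≤ us.length := h3
termination_by l.length
decreasing_by
  have h1 : 0 < l.length := List.length_pos_iff.mpr h
  have := one_le_oneLen h
  simp only [List.length_drop]; omega

/-- Every string P of length m admits a 1-factorization of size at most m,
and the greedy factorization is a 1-factorization of minimal size. -/
theorem greedy_one_factorization_minimal {α : Type*} [DecidableEq α] (P : List α) :
    (∃ us : List (List α), us.flatten = P ∧ (∀ u ∈ us, u ≠ [] ∧ u.Nodup) ∧
        us.length ≤ P.length) ∧
    ((greedy P).flatten = P ∧ (∀ u ∈ greedy P, u ≠ [] ∧ u.Nodup) ∧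
      ∀ us : List (List α), us.flatten = P → (∀ u ∈ us, u ≠ [] ∧ u.Nodup) →
        (greedy P).length ≤ us.length) := by
  refine ⟨⟨P.map (fun a => [a]), ?_, ?_, by simp⟩,
    greedy_flatten P, greedy_valid P, greedy_min P⟩
  · induction P with
    | nil => simp
    | cons a t ih => simp [ih]
  · intro u hu
    simp at hu
    obtain ⟨a, _, rfl⟩ := hu
    simp
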